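/- Let N ≥ 3 and let (P_i)_{i ∈ ℤ/N} be d×d complex matrices, each an orthogonal projection (Hermitian with P_i² = P_i), arranged on a ring, such that P_i and P_j commute whenever j ∉ {i−1, i, i+1} (indices mod N). Let H := ∑_{i∈ℤ/N} P_i and suppose 0 is an eigenvalue of H. If c ∈ ℝ is such that for every i ∈ ℤ/N every eigenvalue of P_i + P_{i+1} is either 0 or at least c, then every eigenvalue of H is either 0 or at least 2c − 1. (Equivalently, the spectral gap of H satisfies Δ(H) ≥ 2 min_i Δ(P_i + P_{i+1}) − 1.) -/

import Mathlib

open scoped BigOperators Matrix ComplexOrder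

section Aux

open Matrix

/-- A Hermitian idempotent matrix is positive semidefinite. -/
private lemma rhg_psd_of_idem {n : ℕ} {M : Matrix (Fin n) (Fin n) ℂ}
    (hM : M.IsHermitian) (h : M * M = M) : M.PosSemidef := by
  have : M = Mᴴ * M := by rw [hM, h]
  rw [this]; exact Matrix.posSemidef_conjTranspose_mul_self M

/-- A finite sum of PSD matrices is PSD. -/
private lemma rhg_psd_sum {ι : Type*} (s : Finset ι) {n : ℕ}
    (f : ι → Matrix (Fin n) (Fin n) ℂ)
    (h : ∀ i ∈ s, (f i).PosSemidef) : (∑ i ∈ s, f i).PosSemidef := by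
  classical
  induction s using Finset.induction_on with
  | empty => simpa using Matrix.PosSemidef.zero
  | insert _ _ hx ih =>
    rw [Finset.sum_insert hx]
    exact (h _ (by simp)).add (ih fun i hi => h i (by simp [hi]))

/-- If a PSD matrix has all eigenvalues `0` or `≥ c`, then `Q² - c Q` is PSD. -/
private lemma rhg_sq_gap {n : ℕ} {Q : Matrix (Fin n) (Fin n) ℂ}
    (hQ : Q.IsHermitian) (hpsd : Q.PosSemidef) {c : ℝ}
    (h : ∀ x : ℝ, (∃ v : Fin n → ℂ, v ≠ 0 ∧ Q.mulVec v = (x : ℂ) • v) → x = 0 ∨ c ≤ x) :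
    (Q * Q - (c : ℂ) • Q).PosSemidef := by
  set U : Matrix (Fin n) (Fin n) ℂ := (hQ.eigenvectorUnitary : Matrix (Fin n) (Fin n) ℂ) with hU
  have hUU : star U * U = 1 := (Matrix.mem_unitaryGroup_iff').mp (hQ.eigenvectorUnitary).2
  have hspec := hQ.spectral_theorem
  set D : Matrix (Fin n) (Fin n) ℂ := diagonal (RCLike.ofReal ∘ hQ.eigenvalues) with hD
  have key : Q * Q - (c : ℂ) • Q = U * (D * D - (c : ℂ) • D) * star U := by
    rw [hspec]
    rw [Matrix.mul_sub, Matrix.sub_mul, Matrix.mul_smul, Matrix.smul_mul]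
    congr 1
    calc (U * D * star U) * (U * D * star U) = U * D * (star U * U) * D * star U := by
          simp only [Matrix.mul_assoc]
        _ = U * (D * D) * star U := by rw [hUU]; simp only [Matrix.mul_one, Matrix.mul_assoc]
  rw [key, Matrix.star_eq_conjTranspose]
  apply Matrix.PosSemidef.mul_mul_conjTranspose_same
  have hDD : D * D - (c : ℂ) • D =
      diagonal (fun i => ((hQ.eigenvalues i * hQ.eigenvalues i - c * hQ.eigenvalues i : ℝ) : ℂ)) := by
    ext i j
    rcases eq_or_ne i j with rfl | hij
    · push_cast
      simp [hD, diagonal_mul_diagonal, Matrix.sub_apply, Matrix.smul_apply,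
        Matrix.diagonal_apply_eq]
      try ring
    · simp [Matrix.sub_apply, Matrix.smul_apply, Matrix.diagonal_apply_ne _ hij, hD,
        diagonal_mul_diagonal]
  rw [hDD]
  rw [Matrix.posSemidef_diagonal_iff]
  intro i
  rw [Complex.zero_le_real]
  have hev : hQ.eigenvalues i = 0 ∨ c ≤ hQ.eigenvalues i := by
    apply h
    refine ⟨⇑(hQ.eigenvectorBasis i), ?_, ?_⟩
    · have := hQ.eigenvectorBasis.orthonormal.ne_zero i
      intro hc; apply this
      ext j; exact congrFun hc j
    · rw [hQ.mulVec_eigenvectorBasis]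
      ext j; simp [Complex.real_smul]
  have hnn : 0 ≤ hQ.eigenvalues i := hpsd.eigenvalues_nonneg i
  rcases hev with h0 | hc
  · simp [h0]
  · nlinarith

end Aux

/-- Spectral-gap lemma for frustration-free local Hamiltonians on a ring.
If `(P_i)_{i ∈ ℤ/N}` are projectors with non-adjacent ones commuting, `H = ∑ i, P i` has `0`
as an eigenvalue, and every eigenvalue of each `P_i + P_{i+1}` is `0` or at least `c`, then
every eigenvalue of `H` is `0` or at least `2c - 1`. -/
theorem ring_hamiltonian_gap
    {N d : ℕ} [NeZero N] (hN : 3 ≤ N)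
    (P : ZMod N → Matrix (Fin d) (Fin d) ℂ)
    (hherm : ∀ i, (P i).IsHermitian)
    (hproj : ∀ i, P i * P i = P i)
    (hcomm : ∀ i j : ZMod N, j ≠ i - 1 → j ≠ i → j ≠ i + 1 → Commute (P i) (P j))
    (hker : ∃ v : Fin d → ℂ, v ≠ 0 ∧ (∑ i, P i).mulVec v = 0)
    (c : ℝ)
    (hgap : ∀ (i : ZMod N) (x : ℝ),
      (∃ v : Fin d → ℂ, v ≠ 0 ∧ (P i + P (i + 1)).mulVec v = (x : ℂ) • v) → x = 0 ∨ c ≤ x) :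
    ∀ x : ℝ,
      (∃ v : Fin d → ℂ, v ≠ 0 ∧ (∑ i, P i).mulVec v = (x : ℂ) • v) →
        x = 0 ∨ 2 * c - 1 ≤ x := by
  classical
  intro x hx
  obtain ⟨v, hv0, hvx⟩ := hx
  -- basic facts about ZMod N
  have h1 : (1 : ZMod N) ≠ 0 := by
    have : ((1 : ℕ) : ZMod N) ≠ 0 := by
      rw [Ne, ZMod.natCast_eq_zero_iff]
      intro h; exact absurd (Nat.le_of_dvd one_pos h) (by omega)
    simpa using this
  have h2 : (2 : ZMod N) ≠ 0 := by
    have : ((2 : ℕ) : ZMod N) ≠ 0 := by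
      rw [Ne, ZMod.natCast_eq_zero_iff]
      intro h; exact absurd (Nat.le_of_dvd two_pos h) (by omega)
    simpa using this
  set H : Matrix (Fin d) (Fin d) ℂ := ∑ i, P i with hH
  set Q : ZMod N → Matrix (Fin d) (Fin d) ℂ := fun i => P i + P (i + 1) with hQ
  -- each P i is PSD
  have hPpsd : ∀ i, (P i).PosSemidef := fun i => rhg_psd_of_idem (hherm i) (hproj i)
  have hHpsd : H.PosSemidef := rhg_psd_sum _ _ fun i _ => hPpsd i
  -- sums over shifted index
  have hshift : ∀ f : ZMod N → Matrix (Fin d) (Fin d) ℂ, ∑ i, f (i + 1) = ∑ i, f i :=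
    fun f => Fintype.sum_equiv (Equiv.addRight (1 : ZMod N)) _ _ (fun i => rfl)
  -- the far-field remainder
  set far : ZMod N → Finset (ZMod N) := fun i => Finset.univ \ {i - 1, i, i + 1} with hfar
  set R : Matrix (Fin d) (Fin d) ℂ := ∑ i, ∑ j ∈ far i, P i * P j with hR
  have hRpsd : R.PosSemidef := by
    apply rhg_psd_sum
    intro i _
    apply rhg_psd_sum
    intro j hj
    simp only [hfar, Finset.mem_sdiff, Finset.mem_insert, Finset.mem_singleton] at hj
    push_neg at hj
    obtain ⟨-, hj1, hj2, hj3⟩ := hj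
    have hco : P i * P j = P j * P i := hcomm i j hj1 hj2 hj3
    apply rhg_psd_of_idem
    · show (P i * P j)ᴴ = P i * P j
      rw [Matrix.conjTranspose_mul, (hherm i).eq, (hherm j).eq, ← hco]
    · calc P i * P j * (P i * P j) = P i * (P j * P i) * P j := by
            simp only [Matrix.mul_assoc]
        _ = P i * P i * (P j * P j) := by rw [← hco]; simp only [Matrix.mul_assoc]
        _ = P i * P j := by rw [hproj, hproj]
  -- splitting the inner sum
  have hsplit : ∀ (i : ZMod N) (f : ZMod N → Matrix (Fin d) (Fin d) ℂ),
      ∑ j, f j = f (i - 1) + f i + f (i + 1) + ∑ j ∈ far i, f j := by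
    intro i f
    have hne1 : (i - 1 : ZMod N) ≠ i := fun h => h1 (sub_eq_self.mp h)
    have hne2 : (i - 1 : ZMod N) ≠ i + 1 := by
      intro h; exact h2 (by linear_combination -h)
    have hne3 : i ≠ i + 1 := fun h => h1 (left_eq_add.mp h)
    have hins : ∑ j ∈ ({i - 1, i, i + 1} : Finset (ZMod N)), f j
        = f (i - 1) + f i + f (i + 1) := by
      rw [Finset.sum_insert (by simp [hne1, hne2]), Finset.sum_insert (by simp [hne3]),
        Finset.sum_singleton, add_assoc]
    rw [← Finset.sum_sdiff (Finset.subset_univ ({i - 1, i, i + 1} : Finset (ZMod N))), hins,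
      hfar]
    abel
  have hPP : ∑ i, P i * P i = H := by
    rw [hH]; exact Finset.sum_congr rfl fun i _ => hproj i
  have hP1 : ∑ i, P (i + 1) * P (i + 1) = H := by
    rw [← hPP]; exact hshift (fun i => P i * P i)
  have hB2 : ∑ i, P (i + 1) * P i = ∑ i, P i * P (i - 1) := by
    have := hshift (fun i => P i * P (i - 1)); simpa using this
  have e1 : H * H = (∑ i, P (i + 1) * P i) + H + (∑ i, P i * P (i + 1)) + R := by
    calc H * H = ∑ i, ∑ j, P i * P j := by
          rw [hH, Finset.sum_mul]
          exact Finset.sum_congr rfl fun i _ => Finset.mul_sum _ _ _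
      _ = ∑ i, (P i * P (i - 1) + P i * P i + P i * P (i + 1) + ∑ j ∈ far i, P i * P j) :=
          Finset.sum_congr rfl fun i _ => hsplit i _
      _ = (∑ i, P i * P (i - 1)) + (∑ i, P i * P i) + (∑ i, P i * P (i + 1)) + R := by
          rw [hR]; simp only [Finset.sum_add_distrib]
      _ = (∑ i, P (i + 1) * P i) + H + (∑ i, P i * P (i + 1)) + R := by
          rw [← hB2, hPP]
  have eQsum : ∑ i, Q i = H + H := by
    simp only [hQ, Finset.sum_add_distrib]
    rw [hshift (fun i => P i), hH]
  have eQ2 : ∑ i, Q i * Q i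
      = H + (∑ i, P i * P (i + 1)) + ((∑ i, P (i + 1) * P i) + H) := by
    have hexp : ∀ i : ZMod N, Q i * Q i
        = (P i * P i + P i * P (i + 1)) + (P (i + 1) * P i + P (i + 1) * P (i + 1)) := by
      intro i
      show (P i + P (i + 1)) * (P i + P (i + 1)) = _
      rw [add_mul, mul_add, mul_add]
    calc ∑ i, Q i * Q i
        = ∑ i, ((P i * P i + P i * P (i + 1)) + (P (i + 1) * P i + P (i + 1) * P (i + 1))) :=
          Finset.sum_congr rfl fun i _ => hexp i
      _ = ((∑ i, P i * P i) + ∑ i, P i * P (i + 1))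
          + ((∑ i, P (i + 1) * P i) + ∑ i, P (i + 1) * P (i + 1)) := by
          simp only [Finset.sum_add_distrib]
          try abel
      _ = _ := by rw [hPP, hP1, add_assoc]
  -- the Knabe decomposition
  have eG : H * H - ((2 * c - 1 : ℝ) : ℂ) • H
      = (∑ i, (Q i * Q i - (c : ℂ) • Q i)) + R := by
    have hs : ∑ i, (Q i * Q i - (c : ℂ) • Q i)
        = (∑ i, Q i * Q i) - (c : ℂ) • (∑ i, Q i) := by
      rw [Finset.smul_sum]; exact Finset.sum_sub_distrib _ _
    rw [hs, eQ2, eQsum, e1]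
    have hco : ((2 * c - 1 : ℝ) : ℂ) = 2 * (c : ℂ) - 1 := by push_cast; ring
    rw [hco]
    module
  have hGpsd : (H * H - ((2 * c - 1 : ℝ) : ℂ) • H).PosSemidef := by
    rw [eG]
    refine (rhg_psd_sum _ _ fun i _ => ?_).add hRpsd
    exact rhg_sq_gap ((hherm i).add (hherm (i + 1))) ((hPpsd i).add (hPpsd (i + 1))) (hgap i)
  -- evaluate on the eigenvector
  have hGv : (H * H - ((2 * c - 1 : ℝ) : ℂ) • H) *ᵥ v
      = ((x * x - (2 * c - 1) * x : ℝ) : ℂ) • v := by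
    rw [Matrix.sub_mulVec, ← Matrix.mulVec_mulVec, hvx, Matrix.mulVec_smul, hvx,
      Matrix.smul_mulVec, hvx, smul_smul, smul_smul, ← sub_smul]
    congr 1; push_cast; ring
  set r : ℝ := ∑ i, Complex.normSq (v i) with hr
  have htr : dotProduct (star v) v = ((r : ℝ) : ℂ) := by
    rw [hr]; push_cast
    exact Finset.sum_congr rfl fun i _ => (Complex.normSq_eq_conj_mul_self).symm
  have hrpos : 0 < r := by
    obtain ⟨i, hi⟩ := Function.ne_iff.mp hv0
    exact Finset.sum_pos' (fun j _ => Complex.normSq_nonneg _)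
      ⟨i, Finset.mem_univ i, Complex.normSq_pos.mpr hi⟩
  have hxnn : 0 ≤ x := by
    have h0 := hHpsd.dotProduct_mulVec_nonneg v
    rw [hvx, dotProduct_smul, smul_eq_mul, htr, ← Complex.ofReal_mul,
      Complex.zero_le_real] at h0
    nlinarith
  have hq : (2 * c - 1) * x ≤ x * x := by
    have h0 := hGpsd.dotProduct_mulVec_nonneg v
    rw [hGv, dotProduct_smul, smul_eq_mul, htr, ← Complex.ofReal_mul,
      Complex.zero_le_real] at h0
    nlinarith
  rcases eq_or_ne x 0 with h | h
  · exact Or.inl h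
  · right
    have hxpos : 0 < x := lt_of_le_of_ne hxnn (Ne.symm h)
    nlinarith
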